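/- Let n ∈ ℕ, let χ̂ ∈ {l,r}^{2n} satisfy χ̂(2i−1) = χ̂(2i) for all i, and let 0̂ denote the interval partition {{2i−1, 2i} : i = 1,…,n}. For a bi-non-crossing partition τ ∈ BNC(χ̂), the following are equivalent: (i) τ ∨ 0̂ = 1 (the join in the lattice BNC(χ̂) is the one-block partition) and every block of τ has even cardinality; (ii) s_χ̂(1) and s_χ̂(2n) lie in the same block of τ, and s_χ̂(2i) and s_χ̂(2i+1) lie in the same block of τ for every i = 1,…,n−1. -/

import Mathlib

open scoped Classical

/-- Labels for left (`l`) and right (`r`) indices. -/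
inductive Side : Type
  | l | r
deriving DecidableEq

variable {n k : ℕ}

/-- The list of indices of `{0, …, n-1}`: first the indices labelled `l` in increasing
order, then the indices labelled `r` in decreasing order. -/
def sListFn (χ : Fin n → Side) : List (Fin n) :=
  ((List.finRange n).filter fun i => decide (χ i = Side.l)) ++
    (((List.finRange n).filter fun i => decide (χ i = Side.r)).reverse)

lemma sListFn_length (χ : Fin n → Side) : (sListFn χ).length = n := by
  have h : ∀ i ∈ List.finRange n,
      (decide (χ i = Side.r)) = (! decide (χ i = Side.l)) := by
    intro i _; cases hx : χ i <;> simp [hx]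
  simp only [sListFn, List.length_append, List.length_reverse]
  rw [List.filter_congr h, ← List.length_append,
    (List.filter_append_perm _ _).length_eq, List.length_finRange]

lemma sListFn_nodup (χ : Fin n → Side) : (sListFn χ).Nodup := by
  refine List.Nodup.append ((List.nodup_finRange n).filter _)
    (List.nodup_reverse.mpr ((List.nodup_finRange n).filter _)) ?_
  intro a ha hb
  rw [List.mem_reverse] at hb
  rw [List.mem_filter] at ha hb
  have h1 := of_decide_eq_true ha.2
  have h2 := of_decide_eq_true hb.2
  rw [h1] at h2; cases h2

/-- The underlying function of the permutation `s_χ`. -/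
def sFun (χ : Fin n → Side) : Fin n → Fin n :=
  fun i => (sListFn χ).get (Fin.cast (sListFn_length χ).symm i)

lemma sFun_bijective (χ : Fin n → Side) : Function.Bijective (sFun χ) := by
  have hinj : Function.Injective (sFun χ) := by
    intro a b hab
    have h := List.nodup_iff_injective_get.mp (sListFn_nodup χ) hab
    exact Fin.ext (by simpa using congrArg Fin.val h)
  exact Finite.injective_iff_bijective.mp hinj

/-- The permutation `s_χ` associated to a map `χ : {1,…,n} → {l,r}`. -/
noncomputable def sChi (χ : Fin n → Side) : Equiv.Perm (Fin n) :=
  Equiv.ofBijective (sFun χ) (sFun_bijective χ)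

/-- The action of a permutation on a partition (viewed as a setoid):
`(σ · π)` relates `x, y` iff `π` relates `σ⁻¹ x, σ⁻¹ y`. -/
def applyPerm (σ : Equiv.Perm (Fin n)) (π : Setoid (Fin n)) : Setoid (Fin n) :=
  Setoid.comap σ.symm π

/-- A partition of `{1,…,k}` (as a setoid) is non-crossing. -/
def IsNC (π : Setoid (Fin k)) : Prop :=
  ∀ a b c d : Fin k, a < b → b < c → c < d → π.r a c → π.r b d → π.r a b

/-- A partition is bi-non-crossing with respect to `χ` iff `s_χ⁻¹ · τ` is non-crossing. -/
def IsBNC (χ : Fin k → Side) (τ : Setoid (Fin k)) : Prop :=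
  IsNC (Setoid.comap (sChi χ) τ)
/-- The ordered list of elements of the block of `c : Quotient τ`, in increasing order. -/
noncomputable def blockList (τ : Setoid (Fin k)) (c : Quotient τ) : List (Fin k) :=
  (List.finRange k).filter fun i => decide (Quotient.mk τ i = c)

/-- Restrict a function on `Fin k` along a list of indices. -/
def restrictIdx {α : Type*} (l : List (Fin k)) (f : Fin k → α) : Fin l.length → α :=
  fun j => f (l.get j)

/-- A noncommutative `*`-probability space structure on a complex `*`-algebra `A`:
a unital, linear, positive functional. -/
structure NCPS (A : Type*) [Ring A] [Algebra ℂ A] [StarRing A] where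
  φ : A → ℂ
  linear : IsLinearMap ℂ φ
  unital : φ 1 = 1
  pos : ∀ a : A, 0 ≤ (φ (star a * a)).re ∧ (φ (star a * a)).im = 0

variable {A : Type*} [Ring A] [Algebra ℂ A] [StarRing A]
variable {B : Type*} [Ring B] [Algebra ℂ B] [StarRing B]

/-- `κ_{χ,τ}(a₁,…,a_k)`: the multiplicative extension of a family of bi-free cumulant
functionals `κ` over the blocks of the partition `τ` (each block read in increasing order,
with the induced `χ`). -/
noncomputable def biCumPart (κ : ∀ m : ℕ, (Fin m → Side) → (Fin m → A) → ℂ)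
    (χ : Fin k → Side) (τ : Setoid (Fin k)) (a : Fin k → A) : ℂ :=
  ∏ᶠ c : Quotient τ,
    κ (blockList τ c).length (restrictIdx (blockList τ c) χ) (restrictIdx (blockList τ c) a)

/-- `κ` is the family of bi-free cumulant functionals of `φ`: the moment–cumulant
formula holds, summing over bi-non-crossing partitions. -/
def IsBiFreeCumulant (φ : A → ℂ) (κ : ∀ m : ℕ, (Fin m → Side) → (Fin m → A) → ℂ) : Prop :=
  ∀ (k : ℕ) (χ : Fin k → Side) (a : Fin k → A),
    φ (List.ofFn a).prod = ∑ᶠ τ ∈ {τ : Setoid (Fin k) | IsBNC χ τ}, biCumPart κ χ τ a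

/-- The multiplicative extension of a family of free cumulant functionals over the blocks
of a partition. -/
noncomputable def freeCumPart (κ : ∀ m : ℕ, (Fin m → B) → ℂ)
    (π : Setoid (Fin k)) (b : Fin k → B) : ℂ :=
  ∏ᶠ c : Quotient π, κ (blockList π c).length (restrictIdx (blockList π c) b)

/-- `κ` is the family of free cumulant functionals of `ψ`: the moment–cumulant formula
holds, summing over non-crossing partitions. -/
def IsFreeCumulant (ψ : B → ℂ) (κ : ∀ m : ℕ, (Fin m → B) → ℂ) : Prop :=
  ∀ (k : ℕ) (b : Fin k → B),
    ψ (List.ofFn b).prod = ∑ᶠ π ∈ {π : Setoid (Fin k) | IsNC π}, freeCumPart κ π b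

/-- The sequence with entries in `{X, X*}` at left indices and `{Y, Y*}` at right indices,
where `ε i = true` means the `i`-th entry is starred. -/
def pairSeq (X Y : A) (χ : Fin k → Side) (ε : Fin k → Bool) : Fin k → A := fun i =>
  match χ i, ε i with
  | Side.l, false => X
  | Side.l, true => star X
  | Side.r, false => Y
  | Side.r, true => star Y

/-- A `Bool`-sequence is alternating. -/
def AltStars (g : Fin k → Bool) : Prop :=
  ∀ (i : ℕ) (h : i + 1 < k), g ⟨i + 1, h⟩ = !g ⟨i, Nat.lt_of_succ_lt h⟩

/-- The pair `(X, Y)` is bi-R-diagonal (with respect to the bi-free cumulants `κ`):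
every bi-free cumulant with left entries in `{X, X*}` and right entries in `{Y, Y*}`
vanishes if it is of odd order or if its entries fail to alternate in `*`-terms and
non-`*`-terms when read in the `χ`-order. -/
def IsBiRDiagonal (κ : ∀ m : ℕ, (Fin m → Side) → (Fin m → A) → ℂ) (X Y : A) : Prop :=
  ∀ (k : ℕ) (χ : Fin k → Side) (ε : Fin k → Bool),
    (Odd k ∨ ¬ AltStars fun i => ε (sChi χ i)) →
      κ k χ (pairSeq X Y χ ε) = 0

/-- The pairs `(X, Y)` and `(Z, W)` are `*`-bi-free: all mixed bi-free cumulants with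
entries from `{X, X*} ∪ {Z, Z*}` at left indices and `{Y, Y*} ∪ {W, W*}` at right indices
vanish. -/
def StarBiFree (κ : ∀ m : ℕ, (Fin m → Side) → (Fin m → A) → ℂ) (X Y Z W : A) : Prop :=
  ∀ (k : ℕ) (χ : Fin k → Side) (ω ε : Fin k → Bool),
    (∃ i j, ω i ≠ ω j) →
      κ k χ (fun i => if ω i then pairSeq Z W χ ε i else pairSeq X Y χ ε i) = 0

/-- `(u_l, u_r)` is a bi-Haar unitary pair with respect to `φ`: both unitaries, the
generated `*`-algebras commute, and `φ(u_lⁿ u_rᵐ) = δ_{n+m,0}` for all `n, m ∈ ℤ`. -/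
structure IsBiHaar (φ : A → ℂ) (ul ur : A) : Prop where
  mul_star_l : ul * star ul = 1
  star_mul_l : star ul * ul = 1
  mul_star_r : ur * star ur = 1
  star_mul_r : star ur * ur = 1
  comm : Commute ul ur
  comm_sl : Commute (star ul) ur
  comm_sr : Commute ul (star ur)
  comm_ss : Commute (star ul) (star ur)
  mom_pp : ∀ p q : ℕ, φ (ul ^ p * ur ^ q) = if p + q = 0 then 1 else 0
  mom_pm : ∀ p q : ℕ, φ (ul ^ p * (star ur) ^ q) = if p = q then 1 else 0
  mom_mp : ∀ p q : ℕ, φ ((star ul) ^ p * ur ^ q) = if p = q then 1 else 0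
  mom_mm : ∀ p q : ℕ, φ ((star ul) ^ p * (star ur) ^ q) = if p + q = 0 then 1 else 0

/-- `v` is a (free) Haar unitary with respect to `ψ`: `v` is a unitary and
`ψ(vⁿ) = 0` for all `n ∈ ℤ \ {0}`. -/
structure IsHaarUnitary (ψ : B → ℂ) (v : B) : Prop where
  mul_star : v * star v = 1
  star_mul : star v * v = 1
  mom_pos : ∀ m : ℕ, 0 < m → ψ (v ^ m) = 0
  mom_neg : ∀ m : ℕ, 0 < m → ψ ((star v) ^ m) = 0

lemma even_nat_card_of_involution {α : Type*} [Fintype α] (f : α → α)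
    (hinv : ∀ x, f (f x) = x) (hne : ∀ x, f x ≠ x) : Even (Nat.card α) := by
  classical
  haveI : Fact (Nat.Prime 2) := ⟨Nat.prime_two⟩
  have hf2 : (show Function.End α from f) ^ ((2:ℕ) ^ (1:ℕ)) = 1 := by
    show (f ∘ f) = id
    funext x
    exact hinv x
  have h := Equiv.Perm.card_fixedPoints_modEq (p := 2) (n := 1) hf2
  have hfix : Fintype.card (Function.fixedPoints (show Function.End α from f)) = 0 := by
    rw [Fintype.card_eq_zero_iff]
    constructor
    intro ⟨x, hx⟩
    exact hne x hx
  rw [hfix] at h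
  rw [Nat.card_eq_fintype_card]
  have := (Nat.modEq_zero_iff_dvd).mp h
  exact (even_iff_two_dvd).mpr this

lemma even_card_saturated {N : ℕ} (τ : Setoid (Fin N))
    (hev : ∀ x : Fin N, Even (Nat.card {y : Fin N // τ.r y x}))
    (S : Finset (Fin N)) (hsat : ∀ x ∈ S, ∀ y, τ.r x y → y ∈ S) :
    Even S.card := by
  classical
  rw [Finset.card_eq_sum_card_fiberwise
    (f := Quotient.mk τ) (t := S.image (Quotient.mk τ))
    (fun x hx => Finset.mem_image_of_mem _ hx)]
  apply Finset.even_sum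
  intro c hc
  obtain ⟨a, ha, rfl⟩ := Finset.mem_image.mp hc
  have hfe : S.filter (fun x => Quotient.mk τ x = Quotient.mk τ a)
      = Finset.univ.filter (fun x => τ.r x a) := by
    ext x
    simp only [Finset.mem_filter, Finset.mem_univ, true_and]
    constructor
    · rintro ⟨-, h⟩; exact Quotient.eq.mp h
    · intro h
      exact ⟨hsat a ha x (τ.symm h), Quotient.eq.mpr h⟩
  rw [hfe]
  have := hev a
  rwa [Nat.card_eq_fintype_card, Fintype.card_subtype] at this

lemma span_saturated {N : ℕ} {τ : Setoid (Fin N)} (hNC : IsNC τ) (x0 : Fin N)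
    (m M : Fin N) (hm : τ.r m x0) (hM : τ.r M x0)
    (hmin : ∀ y, τ.r y x0 → m ≤ y) (hmax : ∀ y, τ.r y x0 → y ≤ M) :
    ∀ x y : Fin N, m ≤ x → x ≤ M → τ.r x y → (m ≤ y ∧ y ≤ M) := by
  intro x y hx1 hx2 hxy
  by_contra hcon
  rw [not_and_or, not_le, not_le] at hcon
  by_cases hx0 : τ.r x x0
  · have hy0 : τ.r y x0 := τ.trans (τ.symm hxy) hx0
    rcases hcon with h | h
    · exact absurd (hmin y hy0) (not_le.mpr h)
    · exact absurd (hmax y hy0) (not_le.mpr h)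
  · -- x is strictly between m and M, not in the class
    have hxm : m < x := lt_of_le_of_ne hx1 (fun h => hx0 (h ▸ hm))
    have hxM : x < M := lt_of_le_of_ne hx2 (fun h => hx0 (h ▸ hM))
    set B1 : Finset (Fin N) := Finset.univ.filter (fun c => τ.r c x0 ∧ c < x) with hB1
    set B2 : Finset (Fin N) := Finset.univ.filter (fun c => τ.r c x0 ∧ x < c) with hB2
    have hB1ne : B1.Nonempty := ⟨m, by simp [hB1, hm, hxm]⟩
    have hB2ne : B2.Nonempty := ⟨M, by simp [hB2, hM, hxM]⟩
    set c1 := B1.max' hB1ne with hc1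
    set c2 := B2.min' hB2ne with hc2
    have hc1mem : τ.r c1 x0 ∧ c1 < x := by
      have := B1.max'_mem hB1ne
      exact (Finset.mem_filter.mp this).2
    have hc2mem : τ.r c2 x0 ∧ x < c2 := by
      have := B2.min'_mem hB2ne
      exact (Finset.mem_filter.mp this).2
    obtain ⟨hc1rel, hc1lt⟩ := hc1mem
    obtain ⟨hc2rel, hc2lt⟩ := hc2mem
    have hc12 : τ.r c1 c2 := τ.trans hc1rel (τ.symm hc2rel)
    rcases hcon with h | h
    · -- y < m ≤ c1
      have hymc : y < c1 := lt_of_lt_of_le h (hmin c1 hc1rel)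
      have := hNC y c1 x c2 hymc hc1lt hc2lt (τ.symm hxy) hc12
      exact absurd (hmin y (τ.trans this hc1rel)) (not_le.mpr h)
    · -- M < y, so c2 ≤ M < y
      have hc2y : c2 < y := lt_of_le_of_lt (hmax c2 hc2rel) h
      have := hNC c1 x c2 y hc1lt hc2lt hc2y hc12 hxy
      exact hx0 (τ.trans (τ.symm this) hc1rel)

lemma consec_saturated {N : ℕ} {τ : Setoid (Fin N)} (hNC : IsNC τ) (u v : Fin N)
    (huv : τ.r u v) (hlt : u < v) (hcons : ∀ z, u < z → z < v → ¬ τ.r u z) :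
    ∀ x y : Fin N, u < x → x < v → τ.r x y → (u < y ∧ y < v) := by
  intro x y hx1 hx2 hxy
  have hxu : ¬ τ.r x u := fun h => hcons x hx1 hx2 (τ.symm h)
  by_contra hcon
  rw [not_and_or, not_lt, not_lt] at hcon
  rcases hcon with h | h
  · rcases lt_or_eq_of_le h with h' | h'
    · have := hNC y u x v h' hx1 hx2 (τ.symm hxy) huv
      exact hxu (τ.trans hxy this)
    · exact hxu (h' ▸ hxy)
  · rcases lt_or_eq_of_le h with h' | h'
    · have := hNC u x v y hx1 hx2 h' huv hxy
      exact hxu (τ.symm this)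
    · exact hxu (τ.trans hxy (h' ▸ (τ.symm huv) : τ.r y u))

def splitSetoid {N : ℕ} (S : Finset (Fin N)) : Setoid (Fin N) :=
  ⟨fun a b => (a ∈ S ↔ b ∈ S), ⟨fun _ => Iff.rfl, Iff.symm, Iff.trans⟩⟩

lemma splitSetoid_rel {N : ℕ} (S : Finset (Fin N)) (a b : Fin N) :
    (splitSetoid S).r a b ↔ (a ∈ S ↔ b ∈ S) := Iff.rfl

lemma splitSetoid_NC {N : ℕ} (S : Finset (Fin N))
    (hconv : ∀ a b c : Fin N, a ≤ b → b ≤ c → a ∈ S → c ∈ S → b ∈ S) :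
    IsNC (splitSetoid S) := by
  intro a b c d hab hbc hcd h1 h2
  constructor
  · intro ha
    exact hconv a b c (le_of_lt hab) (le_of_lt hbc) ha (h1.mp ha)
  · intro hb
    exact h1.mpr (hconv b c d (le_of_lt hbc) (le_of_lt hcd) hb (h2.mp hb))

lemma aux_two_mul_lt {n : ℕ} (i : Fin n) : 2 * i.val < 2 * n := by have := i.isLt; omega

lemma aux_two_mul_add_one_lt {n : ℕ} (i : Fin n) : 2 * i.val + 1 < 2 * n := by
  have := i.isLt; omega

lemma aux_two_mul_sub_one_lt {n : ℕ} (i : Fin n) : 2 * i.val - 1 < 2 * n := by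
  have := i.isLt; omega

lemma aux_zero_lt_two_mul {n : ℕ} (hn : 0 < n) : 0 < 2 * n := by omega

lemma aux_two_mul_pred_lt {n : ℕ} (hn : 0 < n) : 2 * n - 1 < 2 * n := by omega

lemma NC_main (n : ℕ) (hn : 0 < n) (π : Setoid (Fin (2*n))) (hπ : IsNC π) :
    ((∀ ρ : Setoid (Fin (2*n)), IsNC ρ → π ≤ ρ →
        Setoid.ker (fun x : Fin (2*n) => x.val / 2) ≤ ρ → ρ = ⊤) ∧
      ∀ x : Fin (2*n), Even (Nat.card {y : Fin (2*n) // π.r y x})) ↔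
    (π.r ⟨0, aux_zero_lt_two_mul hn⟩ ⟨2*n-1, aux_two_mul_pred_lt hn⟩ ∧
      ∀ i : Fin n, 0 < i.val →
        π.r ⟨2*i.val-1, aux_two_mul_sub_one_lt i⟩ ⟨2*i.val, aux_two_mul_lt i⟩) := by
  constructor
  · rintro ⟨hjoin, heven⟩
    constructor
    · -- π.r 0 (2n-1)
      have h00 : π.r ⟨0, by omega⟩ ⟨0, by omega⟩ := π.refl _
      set u : Fin (2*n) := ⟨0, by omega⟩ with hu
      set Bu : Finset (Fin (2*n)) := Finset.univ.filter (fun y => π.r y u) with hBu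
      have hune : Bu.Nonempty := ⟨u, Finset.mem_filter.mpr ⟨Finset.mem_univ _, π.refl u⟩⟩
      set M := Bu.max' hune with hM
      have hMrel : π.r M u := (Finset.mem_filter.mp (Bu.max'_mem hune)).2
      have hmax : ∀ y, π.r y u → y ≤ M := fun y hy =>
        Bu.le_max' y (Finset.mem_filter.mpr ⟨Finset.mem_univ _, hy⟩)
      have hmin : ∀ y, π.r y u → u ≤ y := fun y _ => by
        rw [Fin.le_def]; simp [hu]
      have hsat := span_saturated hπ u u M (π.refl u) hMrel hmin hmax
      -- S = Iic M is saturated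
      have hsat' : ∀ x ∈ Finset.Iic M, ∀ y, π.r x y → y ∈ Finset.Iic M := by
        intro x hx y hxy
        rw [Finset.mem_Iic] at *
        exact (hsat x y (by rw [Fin.le_def]; simp [hu]) hx hxy).2
      have hev := even_card_saturated π heven _ hsat'
      rw [Fin.card_Iic] at hev
      have hModd : M.val % 2 = 1 := by
        rcases hev with ⟨t, ht⟩; omega
      -- apply hjoin
      by_cases hMtop : M.val = 2*n-1
      · have : M = ⟨2*n-1, by omega⟩ := Fin.ext hMtop
        rw [this] at hMrel
        exact π.symm hMrel
      · exfalso
        have hconv : ∀ a b c : Fin (2*n), a ≤ b → b ≤ c →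
            a ∈ Finset.Iic M → c ∈ Finset.Iic M → b ∈ Finset.Iic M := by
          intro a b c h1 h2 _ hc
          rw [Finset.mem_Iic] at *
          exact le_trans h2 hc
        have hle : π ≤ splitSetoid (Finset.Iic M) := by
          rw [Setoid.le_def]
          intro x y hxy
          constructor
          · intro hx; exact hsat' x hx y hxy
          · intro hy; exact hsat' y hy x (π.symm hxy)
        have hker : Setoid.ker (fun x : Fin (2*n) => x.val / 2)
            ≤ splitSetoid (Finset.Iic M) := by
          rw [Setoid.le_def]
          intro x y hxy
          have hxy' : x.val / 2 = y.val / 2 := hxy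
          show x ∈ Finset.Iic M ↔ y ∈ Finset.Iic M
          rw [Finset.mem_Iic, Finset.mem_Iic, Fin.le_def, Fin.le_def]
          omega
        have htop := hjoin _ (splitSetoid_NC _ hconv) hle hker
        have : (splitSetoid (Finset.Iic M)).r ⟨0, by omega⟩ ⟨2*n-1, by omega⟩ := by
          rw [htop]; trivial
        have h2 : (⟨0, by omega⟩ : Fin (2*n)) ∈ Finset.Iic M
            ↔ (⟨2*n-1, by omega⟩ : Fin (2*n)) ∈ Finset.Iic M := this
        rw [Finset.mem_Iic, Finset.mem_Iic, Fin.le_def, Fin.le_def] at h2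
        simp only [Fin.val_mk] at h2
        have hMlt : M.val < 2*n := M.isLt
        omega
    · -- pairs
      intro i hi
      set u : Fin (2*n) := ⟨2*i.val-1, by have := i.isLt; omega⟩ with hu
      have hiub := i.isLt
      set Bu : Finset (Fin (2*n)) := Finset.univ.filter (fun y => π.r y u) with hBu
      have hune : Bu.Nonempty := ⟨u, Finset.mem_filter.mpr ⟨Finset.mem_univ _, π.refl u⟩⟩
      set M := Bu.max' hune with hM
      set m := Bu.min' hune with hm
      have hMrel : π.r M u := (Finset.mem_filter.mp (Bu.max'_mem hune)).2
      have hmrel : π.r m u := (Finset.mem_filter.mp (Bu.min'_mem hune)).2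
      have hmax : ∀ y, π.r y u → y ≤ M := fun y hy =>
        Bu.le_max' y (Finset.mem_filter.mpr ⟨Finset.mem_univ _, hy⟩)
      have hmin : ∀ y, π.r y u → m ≤ y := fun y hy =>
        Bu.min'_le y (Finset.mem_filter.mpr ⟨Finset.mem_univ _, hy⟩)
      by_cases hMu : M = u
      · -- u is the max of its block: contradiction
        exfalso
        have hsat := span_saturated hπ u m M hmrel hMrel hmin hmax
        have hsat' : ∀ x ∈ Finset.Icc m M, ∀ y, π.r x y → y ∈ Finset.Icc m M := by
          intro x hx y hxy
          rw [Finset.mem_Icc] at *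
          exact hsat x y hx.1 hx.2 hxy
        have hev := even_card_saturated π heven _ hsat'
        rw [Fin.card_Icc] at hev
        have hmM : m ≤ M := le_trans (hmin u (π.refl u)) (hmax u (π.refl u))
        rw [Fin.le_def] at hmM
        have hMval : M.val = 2*i.val - 1 := by rw [hMu]
        have hmeven : m.val % 2 = 0 := by
          rcases hev with ⟨t, ht⟩; omega
        have hconv : ∀ a b c : Fin (2*n), a ≤ b → b ≤ c →
            a ∈ Finset.Icc m M → c ∈ Finset.Icc m M → b ∈ Finset.Icc m M := by
          intro a b c h1 h2 ha hc
          rw [Finset.mem_Icc] at *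
          exact ⟨le_trans ha.1 h1, le_trans h2 hc.2⟩
        have hle : π ≤ splitSetoid (Finset.Icc m M) := by
          rw [Setoid.le_def]
          intro x y hxy
          constructor
          · intro hx; exact hsat' x hx y hxy
          · intro hy; exact hsat' y hy x (π.symm hxy)
        have hker : Setoid.ker (fun x : Fin (2*n) => x.val / 2)
            ≤ splitSetoid (Finset.Icc m M) := by
          rw [Setoid.le_def]
          intro x y hxy
          have hxy' : x.val / 2 = y.val / 2 := hxy
          show x ∈ Finset.Icc m M ↔ y ∈ Finset.Icc m M
          rw [Finset.mem_Icc, Finset.mem_Icc, Fin.le_def, Fin.le_def,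
            Fin.le_def, Fin.le_def]
          omega
        have htop := hjoin _ (splitSetoid_NC _ hconv) hle hker
        have hrel : (splitSetoid (Finset.Icc m M)).r u
            ⟨2*i.val, by omega⟩ := by rw [htop]; trivial
        have h2 : u ∈ Finset.Icc m M ↔ (⟨2*i.val, by omega⟩ : Fin (2*n))
            ∈ Finset.Icc m M := hrel
        rw [Finset.mem_Icc, Finset.mem_Icc, Fin.le_def, Fin.le_def,
          Fin.le_def, Fin.le_def] at h2
        simp only [hu, Fin.val_mk] at h2 hMval
        omega
      · -- there is an element of the block above u
        have huM : u < M := lt_of_le_of_ne (hmax u (π.refl u)) (Ne.symm hMu)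
        set Bv : Finset (Fin (2*n)) := Bu.filter (fun c => u < c) with hBv
        have hvne : Bv.Nonempty := ⟨M, by
          rw [hBv, Finset.mem_filter]
          exact ⟨Bu.max'_mem hune, huM⟩⟩
        set v := Bv.min' hvne with hv
        have hvmem := Finset.mem_filter.mp (Bv.min'_mem hvne)
        have hvrel : π.r v u := (Finset.mem_filter.mp hvmem.1).2
        have huv : u < v := hvmem.2
        have hvmin : ∀ c, π.r c u → u < c → v ≤ c := fun c h1 h2 =>
          Bv.min'_le c (by
            rw [hBv, Finset.mem_filter]
            exact ⟨Finset.mem_filter.mpr ⟨Finset.mem_univ _, h1⟩, h2⟩)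
        by_cases hveq : v.val = 2*i.val
        · have : v = ⟨2*i.val, by omega⟩ := Fin.ext hveq
          rw [this] at hvrel
          exact π.symm hvrel
        · exfalso
          have hvgt : 2*i.val < v.val := by
            rw [Fin.lt_def] at huv
            simp only [hu] at huv
            omega
          have hcons : ∀ z, u < z → z < v → ¬ π.r u z := by
            intro z h1 h2 hz
            have := hvmin z (π.symm hz) h1
            exact absurd h2 (not_lt.mpr this)
          have hsat := consec_saturated hπ u v (π.symm hvrel) huv hcons
          have hsat' : ∀ x ∈ Finset.Ioo u v, ∀ y, π.r x y → y ∈ Finset.Ioo u v := by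
            intro x hx y hxy
            rw [Finset.mem_Ioo] at *
            exact hsat x y hx.1 hx.2 hxy
          have hev := even_card_saturated π heven _ hsat'
          rw [Fin.card_Ioo] at hev
          rw [Fin.lt_def] at huv
          have hveven : v.val % 2 = 0 := by
            rcases hev with ⟨t, ht⟩
            simp only [hu] at huv ht
            omega
          have hconv : ∀ a b c : Fin (2*n), a ≤ b → b ≤ c →
              a ∈ Finset.Ioo u v → c ∈ Finset.Ioo u v → b ∈ Finset.Ioo u v := by
            intro a b c h1 h2 ha hc
            rw [Finset.mem_Ioo] at *
            exact ⟨lt_of_lt_of_le ha.1 h1, lt_of_le_of_lt h2 hc.2⟩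
          have hle : π ≤ splitSetoid (Finset.Ioo u v) := by
            rw [Setoid.le_def]
            intro x y hxy
            constructor
            · intro hx; exact hsat' x hx y hxy
            · intro hy; exact hsat' y hy x (π.symm hxy)
          have hker : Setoid.ker (fun x : Fin (2*n) => x.val / 2)
              ≤ splitSetoid (Finset.Ioo u v) := by
            rw [Setoid.le_def]
            intro x y hxy
            have hxy' : x.val / 2 = y.val / 2 := hxy
            show x ∈ Finset.Ioo u v ↔ y ∈ Finset.Ioo u v
            rw [Finset.mem_Ioo, Finset.mem_Ioo, Fin.lt_def, Fin.lt_def,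
              Fin.lt_def, Fin.lt_def]
            simp only [hu, Fin.val_mk]
            omega
          have htop := hjoin _ (splitSetoid_NC _ hconv) hle hker
          have hrel : (splitSetoid (Finset.Ioo u v)).r u
              ⟨2*i.val, by omega⟩ := by rw [htop]; trivial
          have h2 : u ∈ Finset.Ioo u v ↔ (⟨2*i.val, by omega⟩ : Fin (2*n))
              ∈ Finset.Ioo u v := hrel
          rw [Finset.mem_Ioo, Finset.mem_Ioo, Fin.lt_def, Fin.lt_def,
            Fin.lt_def, Fin.lt_def] at h2
          simp only [hu, Fin.val_mk] at h2
          omega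
  · rintro ⟨h0, hp⟩
    constructor
    · -- join condition
      intro ρ _ hπρ hker
      have step : ∀ m : ℕ, (h : m + 1 < 2*n) →
          ρ.r ⟨m, by omega⟩ ⟨m+1, h⟩ := by
        intro m h
        by_cases hpar : m % 2 = 0
        · exact Setoid.le_def.mp hker (show (⟨m, by omega⟩ : Fin (2*n)).val / 2
            = (⟨m+1, h⟩ : Fin (2*n)).val / 2 by simp; omega)
        · have hip : ((m+1)/2) < n := by omega
          have := hp ⟨(m+1)/2, hip⟩ (by simp; omega)
          have e1 : (⟨2*((m+1)/2)-1, by omega⟩ : Fin (2*n)) = ⟨m, by omega⟩ :=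
            Fin.ext (by simp; omega)
          have e2 : (⟨2*((m+1)/2), by omega⟩ : Fin (2*n)) = ⟨m+1, h⟩ :=
            Fin.ext (by simp; omega)
          rw [e1, e2] at this
          exact Setoid.le_def.mp hπρ this
      have chain : ∀ x : Fin (2*n), ρ.r ⟨0, by omega⟩ x := by
        intro x
        obtain ⟨v, hvlt⟩ := x
        induction v with
        | zero => exact ρ.refl _
        | succ w ih => exact ρ.trans (ih (by omega)) (step w hvlt)
      apply Setoid.ext
      intro a b
      constructor
      · intro _; rw [Setoid.top_def]; trivial
      · intro _; exact ρ.trans (ρ.symm (chain a)) (chain b)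
    · -- even blocks
      intro x
      have relcast : ∀ (a b a' b' : Fin (2*n)), π.r a b → a.val = a'.val →
          b.val = b'.val → π.r a' b' := by
        intro a b a' b' h e1 e2
        rw [← Fin.ext e1, ← Fin.ext e2]
        exact h
      have hg : ∀ m, m < 2*n → (if m = 0 then 2*n-1 else if m = 2*n-1 then 0
          else if m % 2 = 1 then m + 1 else m - 1) < 2*n := by
        intro m hm; split_ifs <;> omega
      set pf : Fin (2*n) → Fin (2*n) := fun y =>
        ⟨if y.val = 0 then 2*n-1 else if y.val = 2*n-1 then 0
          else if y.val % 2 = 1 then y.val + 1 else y.val - 1, hg _ y.isLt⟩ with hpf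
      have hpfval : ∀ y : Fin (2*n), (pf y).val = (if y.val = 0 then 2*n-1
          else if y.val = 2*n-1 then 0
          else if y.val % 2 = 1 then y.val + 1 else y.val - 1) := fun _ => rfl
      have hrelp : ∀ y : Fin (2*n), π.r y (pf y) := by
        intro y
        have hylt := y.isLt
        by_cases h1 : y.val = 0
        · exact relcast _ _ _ _ h0 (by simp [h1]) (by rw [hpfval]; simp [h1])
        · by_cases h2 : y.val = 2*n-1
          · exact relcast _ _ _ _ (π.symm h0) (by simp [h2])
              (by rw [hpfval]; rw [if_neg h1, if_pos h2])
          · by_cases h3 : y.val % 2 = 1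
            · have hip : (y.val+1)/2 < n := by omega
              exact relcast _ _ _ _ (hp ⟨(y.val+1)/2, hip⟩ (by simp only [Fin.val_mk]; omega))
                (by simp only [Fin.val_mk]; omega)
                (by rw [hpfval]; simp only [Fin.val_mk, if_neg h1, if_neg h2, if_pos h3]; omega)
            · have hip : (y.val)/2 < n := by omega
              exact relcast _ _ _ _ (π.symm (hp ⟨y.val/2, hip⟩ (by simp only [Fin.val_mk]; omega)))
                (by simp only [Fin.val_mk]; omega)
                (by rw [hpfval]; simp only [Fin.val_mk, if_neg h1, if_neg h2, if_neg h3]; omega)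
      have hpinv : ∀ y, pf (pf y) = y := by
        intro y
        have hylt := y.isLt
        apply Fin.ext
        rw [hpfval, hpfval]
        split_ifs <;> first | omega | exact absurd ‹False› not_false
      have hpne : ∀ y, pf y ≠ y := by
        intro y hy
        have := congrArg Fin.val hy
        rw [hpfval] at this
        have hylt := y.isLt
        split_ifs at this <;> omega
      exact even_nat_card_of_involution
        (fun z : {y : Fin (2*n) // π.r y x} =>
          ⟨pf z.1, π.trans (π.symm (hrelp z.1)) z.2⟩)
        (fun z => Subtype.ext (hpinv z.1))
        (fun z hz => hpne z.1 (congrArg Subtype.val hz))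

theorem getElem_idx_congr {α : Type*} (l : List α) {i j : ℕ} (h : i < l.length) (e : i = j) :
    l[i]'h = l[j]'(e ▸ h) := by subst e; rfl

lemma pair_head (l : List ℕ) (hs : l.Pairwise (· < ·))
    (hcl : ∀ x, 2*x ∈ l ↔ 2*x+1 ∈ l) :
    l = [] ∨ ∃ i t, l = 2*i :: (2*i+1) :: t ∧ t.Pairwise (· < ·)
      ∧ (∀ x, 2*x ∈ t ↔ 2*x+1 ∈ t) := by
  match l, hs with
  | [], _ => exact Or.inl rfl
  | a :: l', hs =>
    right
    have hlt1 : ∀ z ∈ l', a < z := fun z hz => (List.pairwise_cons.mp hs).1 z hz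
    have haeven : a % 2 = 0 := by
      by_contra hodd
      have h1 : 2*(a/2)+1 ∈ a :: l' := by
        have : 2*(a/2)+1 = a := by omega
        rw [this]; exact List.mem_cons_self
      have h2 : 2*(a/2) ∈ a :: l' := (hcl (a/2)).mpr h1
      rcases List.mem_cons.mp h2 with h | h
      · omega
      · have := hlt1 _ h; omega
    refine ⟨a/2, ?_⟩
    have ha : 2*(a/2) = a := by omega
    have h1 : 2*(a/2)+1 ∈ a :: l' := (hcl (a/2)).mp (by rw [ha]; exact List.mem_cons_self)
    have h1' : a+1 ∈ a :: l' := by rw [ha] at h1; exact h1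
    have h1'' : a+1 ∈ l' := by
      rcases List.mem_cons.mp h1' with h | h
      · omega
      · exact h
    match l', h1'' with
    | b :: t, h1'' =>
      have hltb : ∀ z ∈ t, b < z := fun z hz =>
        (List.pairwise_cons.mp (List.pairwise_cons.mp hs).2).1 z hz
      have hab : a < b := hlt1 b (List.mem_cons_self)
      have hb : b = a + 1 := by
        rcases List.mem_cons.mp h1'' with h | h
        · omega
        · have := hltb _ h
          have := hlt1 (a+1) (List.mem_cons.mpr (Or.inr h))
          omega
      refine ⟨t, by rw [ha, hb], (List.pairwise_cons.mp (List.pairwise_cons.mp hs).2).2, ?_⟩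
      intro x
      constructor
      · intro hx
        have hbx := hltb _ hx
        have hx' : 2*x ∈ a :: b :: t := by simp [hx]
        have := (hcl x).mp hx'
        rcases List.mem_cons.mp this with h | h
        · omega
        · rcases List.mem_cons.mp h with h | h
          · omega
          · exact h
      · intro hx
        have hbx := hltb _ hx
        have hx' : 2*x+1 ∈ a :: b :: t := by simp [hx]
        have := (hcl x).mpr hx'
        rcases List.mem_cons.mp this with h | h
        · omega
        · rcases List.mem_cons.mp h with h | h
          · omega
          · exact h

lemma pairlist_get : ∀ (N : ℕ) (l : List ℕ), l.length ≤ N → l.Pairwise (· < ·) →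
    (∀ x, 2*x ∈ l ↔ 2*x+1 ∈ l) → ∀ m (h2 : 2*m+1 < l.length),
    l[2*m+1]'h2 = l[2*m]'(by omega) + 1 ∧ l[2*m]'(by omega) % 2 = 0 := by
  intro N
  induction N with
  | zero =>
    intro l hl _ _ m h2
    omega
  | succ N ih =>
    intro l hl hs hcl m h2
    rcases pair_head l hs hcl with rfl | ⟨i, t, rfl, hts, htcl⟩
    · simp at h2
    · match m with
      | 0 => simp
      | m+1 =>
        have hlen : t.length ≤ N := by
          simp only [List.length_cons] at hl
          omega
        have h2' : 2*m+1 < t.length := by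
          simp only [List.length_cons] at h2
          omega
        have := ih t hlen hts htcl m h2'
        have e1 : (2*i :: (2*i+1) :: t)[2*(m+1)+1]'h2 = t[2*m+1]'h2' := by
          rw [getElem_idx_congr _ h2 (show 2*(m+1)+1 = (2*m+1)+1+1 by ring)]
          rw [List.getElem_cons_succ, List.getElem_cons_succ]
        have e2 : (2*i :: (2*i+1) :: t)[2*(m+1)]'(by omega) = t[2*m]'(by omega) := by
          rw [getElem_idx_congr _ (by omega) (show 2*(m+1) = (2*m)+1+1 by ring)]
          rw [List.getElem_cons_succ, List.getElem_cons_succ]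
        rw [e1, e2]
        exact this

lemma pairlist_even_len : ∀ (N : ℕ) (l : List ℕ), l.length ≤ N → l.Pairwise (· < ·) →
    (∀ x, 2*x ∈ l ↔ 2*x+1 ∈ l) → Even l.length := by
  intro N
  induction N with
  | zero =>
    intro l hl _ _
    simp [Nat.le_zero.mp hl]
  | succ N ih =>
    intro l hl hs hcl
    rcases pair_head l hs hcl with rfl | ⟨i, t, rfl, hts, htcl⟩
    · simp
    · have hlen : t.length ≤ N := by
        simp only [List.length_cons] at hl
        omega
      have := ih t hlen hts htcl
      simp only [List.length_cons]
      rcases this with ⟨w, hw⟩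
      exact ⟨w+1, by omega⟩

lemma pairlist_get' (l : List ℕ) (hs : l.Pairwise (· < ·))
    (hcl : ∀ x, 2*x ∈ l ↔ 2*x+1 ∈ l) (k1 k2 : ℕ) (h1 : k1 < l.length)
    (h2 : k2 < l.length) (hk1 : k1 % 2 = 0) (hk2 : k2 = k1 + 1) :
    l[k2]'h2 = l[k1]'h1 + 1 ∧ l[k1]'h1 % 2 = 0 := by
  subst hk2
  have hmain := pairlist_get l.length l le_rfl hs hcl (k1/2) (by omega)
  have e1 : l[k1]'h1 = l[2*(k1/2)]'(by omega) :=
    getElem_idx_congr l h1 (by omega)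
  have e2 : l[k1+1]'h2 = l[2*(k1/2)+1]'(by omega) :=
    getElem_idx_congr l h2 (by omega)
  rw [e1, e2]
  exact hmain

section ListPart

variable {n : ℕ}

lemma mem_valList (χ : Fin (2*n) → Side) (c : Side) (z : ℕ) :
    (z ∈ (((List.finRange (2*n)).filter fun i => decide (χ i = c)).map Fin.val))
      ↔ ∃ h : z < 2*n, χ ⟨z, h⟩ = c := by
  rw [List.mem_map]
  constructor
  · rintro ⟨i, hi, rfl⟩
    rw [List.mem_filter] at hi
    refine ⟨i.isLt, ?_⟩
    have := of_decide_eq_true hi.2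
    rwa [Fin.eta]
  · rintro ⟨h, hc⟩
    exact ⟨⟨z, h⟩, List.mem_filter.mpr ⟨List.mem_finRange _, decide_eq_true hc⟩, rfl⟩

lemma sorted_valList (χ : Fin (2*n) → Side) (c : Side) :
    (((List.finRange (2*n)).filter fun i => decide (χ i = c)).map Fin.val).Pairwise (· < ·) := by
  apply List.Pairwise.map
  · exact fun a b hab => hab
  · exact ((List.pairwise_lt_finRange (2*n)).filter _)

lemma closed_valList (χ : Fin (2*n) → Side)
    (hχ : ∀ i : Fin n, χ ⟨2 * i.val, aux_two_mul_lt i⟩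
      = χ ⟨2 * i.val + 1, aux_two_mul_add_one_lt i⟩) (c : Side) :
    ∀ x, (2*x ∈ (((List.finRange (2*n)).filter fun i => decide (χ i = c)).map Fin.val))
      ↔ 2*x+1 ∈ (((List.finRange (2*n)).filter fun i => decide (χ i = c)).map Fin.val) := by
  intro x
  rw [mem_valList, mem_valList]
  constructor
  · rintro ⟨h, hc⟩
    refine ⟨by omega, ?_⟩
    have := hχ ⟨x, by omega⟩
    simp only [Fin.val_mk] at this
    rw [← this]
    exact hc
  · rintro ⟨h, hc⟩
    refine ⟨by omega, ?_⟩
    have := hχ ⟨x, by omega⟩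
    simp only [Fin.val_mk] at this
    rw [this]
    exact hc

lemma sChi_val (χ : Fin (2*n) → Side) (z : Fin (2*n)) (hz : z.val < ((sListFn χ).map Fin.val).length) :
    (sChi χ z).val = ((sListFn χ).map Fin.val)[z.val]'hz := by
  show (sFun χ z).val = _
  rw [sFun]
  rw [List.getElem_map]
  rfl

lemma sChi_pair (χ : Fin (2*n) → Side)
    (hχ : ∀ i : Fin n, χ ⟨2 * i.val, aux_two_mul_lt i⟩
      = χ ⟨2 * i.val + 1, aux_two_mul_add_one_lt i⟩)
    (j : ℕ) (h : 2*j+1 < 2*n) :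
    (sChi χ ⟨2*j, by omega⟩).val / 2 = (sChi χ ⟨2*j+1, h⟩).val / 2 := by
  classical
  set Av : List ℕ := (((List.finRange (2*n)).filter fun i => decide (χ i = Side.l)).map Fin.val) with hAv
  set Bv : List ℕ := (((List.finRange (2*n)).filter fun i => decide (χ i = Side.r)).map Fin.val) with hBv
  have hL : (sListFn χ).map Fin.val = Av ++ Bv.reverse := by
    rw [sListFn, List.map_append, List.map_reverse]
  have hlen : (Av ++ Bv.reverse).length = 2*n := by
    rw [← hL, List.length_map, sListFn_length]
  rw [List.length_append, List.length_reverse] at hlen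
  have hAe : Even Av.length := pairlist_even_len Av.length Av le_rfl
    (sorted_valList χ Side.l) (closed_valList χ hχ Side.l)
  have hBe : Even Bv.length := pairlist_even_len Bv.length Bv le_rfl
    (sorted_valList χ Side.r) (closed_valList χ hχ Side.r)
  have hb1 : (2*j : ℕ) < ((sListFn χ).map Fin.val).length := by
    rw [List.length_map, sListFn_length]; omega
  have hb2 : (2*j+1 : ℕ) < ((sListFn χ).map Fin.val).length := by
    rw [List.length_map, sListFn_length]; omega
  rw [sChi_val χ ⟨2*j, by omega⟩ hb1, sChi_val χ ⟨2*j+1, h⟩ hb2]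
  obtain ⟨p, hp⟩ := hAe
  obtain ⟨q, hq⟩ := hBe
  rw [List.getElem_of_eq hL, List.getElem_of_eq hL]
  by_cases hcase : 2*j+1 < Av.length
  · have e1 : (Av ++ Bv.reverse)[2*j]'(by rw [List.length_append, List.length_reverse]; omega)
        = Av[2*j]'(by omega) := List.getElem_append_left (by omega)
    have e2 : (Av ++ Bv.reverse)[2*j+1]'(by rw [List.length_append, List.length_reverse]; omega)
        = Av[2*j+1]'(by omega) := List.getElem_append_left (by omega)
    rw [e1, e2]
    have hA := pairlist_get' Av (sorted_valList χ Side.l) (closed_valList χ hχ Side.l)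
      (2*j) (2*j+1) (by omega) (by omega) (by omega) (by omega)
    omega
  · -- in the reversed part
    have haj : Av.length ≤ 2*j := by omega
    have hjb : 2*j+1 - Av.length < Bv.reverse.length := by
      rw [List.length_reverse]; omega
    have e1 : (Av ++ Bv.reverse)[2*j]'(by rw [List.length_append, List.length_reverse]; omega)
        = Bv.reverse[2*j - Av.length]'(by rw [List.length_reverse]; omega) :=
      List.getElem_append_right haj
    have e2 : (Av ++ Bv.reverse)[2*j+1]'(by rw [List.length_append, List.length_reverse]; omega)
        = Bv.reverse[2*j+1 - Av.length]'hjb :=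
      List.getElem_append_right (by omega)
    rw [e1, e2]
    rw [List.getElem_reverse, List.getElem_reverse]
    have hB := pairlist_get' Bv (sorted_valList χ Side.r) (closed_valList χ hχ Side.r)
      (Bv.length - 1 - (2*j+1 - Av.length)) (Bv.length - 1 - (2*j - Av.length))
      (by omega) (by omega) (by omega) (by omega)
    omega

lemma sChi_pair_iff (χ : Fin (2*n) → Side)
    (hχ : ∀ i : Fin n, χ ⟨2 * i.val, aux_two_mul_lt i⟩
      = χ ⟨2 * i.val + 1, aux_two_mul_add_one_lt i⟩) (x y : Fin (2*n)) :
    (sChi χ x).val / 2 = (sChi χ y).val / 2 ↔ x.val / 2 = y.val / 2 := by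
  have hpair : ∀ a b : Fin (2*n), a.val / 2 = b.val / 2 →
      (sChi χ a).val / 2 = (sChi χ b).val / 2 := by
    intro a b hab
    by_cases heq : a = b
    · rw [heq]
    · have hne : a.val ≠ b.val := fun h => heq (Fin.ext h)
      have hb2 : 2*(a.val/2)+1 < 2*n := by
        have := a.isLt; have := b.isLt; omega
      have := sChi_pair χ hχ (a.val/2) hb2
      have e1 : a = ⟨2*(a.val/2), by omega⟩ ∨ a = ⟨2*(a.val/2)+1, hb2⟩ := by
        rcases Nat.even_or_odd a.val with h | h
        · left; exact Fin.ext (by simp only [Fin.val_mk]; rcases h with ⟨t, ht⟩; omega)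
        · right; exact Fin.ext (by simp only [Fin.val_mk]; rcases h with ⟨t, ht⟩; omega)
      have e2 : b = ⟨2*(a.val/2), by omega⟩ ∨ b = ⟨2*(a.val/2)+1, hb2⟩ := by
        rcases Nat.even_or_odd b.val with h | h
        · left; exact Fin.ext (by simp only [Fin.val_mk]; rcases h with ⟨t, ht⟩; omega)
        · right; exact Fin.ext (by simp only [Fin.val_mk]; rcases h with ⟨t, ht⟩; omega)
      rcases e1 with e1 | e1 <;> rcases e2 with e2 | e2 <;>
        [ (have ha : ((sChi χ) a).val = ((sChi χ) ⟨2*(a.val/2), by omega⟩).val := by conv_lhs => rw [e1]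
           have hb : ((sChi χ) b).val = ((sChi χ) ⟨2*(a.val/2), by omega⟩).val := by conv_lhs => rw [e2]
           omega);
          (have ha : ((sChi χ) a).val = ((sChi χ) ⟨2*(a.val/2), by omega⟩).val := by conv_lhs => rw [e1]
           have hb : ((sChi χ) b).val = ((sChi χ) ⟨2*(a.val/2)+1, hb2⟩).val := by conv_lhs => rw [e2]
           omega);
          (have ha : ((sChi χ) a).val = ((sChi χ) ⟨2*(a.val/2)+1, hb2⟩).val := by conv_lhs => rw [e1]
           have hb : ((sChi χ) b).val = ((sChi χ) ⟨2*(a.val/2), by omega⟩).val := by conv_lhs => rw [e2]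
           omega);
          (have ha : ((sChi χ) a).val = ((sChi χ) ⟨2*(a.val/2)+1, hb2⟩).val := by conv_lhs => rw [e1]
           have hb : ((sChi χ) b).val = ((sChi χ) ⟨2*(a.val/2)+1, hb2⟩).val := by conv_lhs => rw [e2]
           omega)]
  constructor
  · intro h
    by_contra hne
    -- partners
    have hax : 2*(x.val/2) + (1 - x.val % 2) < 2*n := by
      have := x.isLt; omega
    have hay : 2*(y.val/2) + (1 - y.val % 2) < 2*n := by
      have := y.isLt; omega
    set x' : Fin (2*n) := ⟨2*(x.val/2) + (1 - x.val % 2), hax⟩ with hx'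
    set y' : Fin (2*n) := ⟨2*(y.val/2) + (1 - y.val % 2), hay⟩ with hy'
    have hxx' : x.val ≠ x'.val := by simp only [hx', Fin.val_mk]; omega
    have hx2 : x'.val / 2 = x.val / 2 := by simp only [hx', Fin.val_mk]; omega
    have hy2 : y'.val / 2 = y.val / 2 := by simp only [hy', Fin.val_mk]; omega
    have h1 : (sChi χ x').val / 2 = (sChi χ x).val / 2 := hpair x' x hx2
    have h3 : (sChi χ y').val / 2 = (sChi χ y).val / 2 := hpair y' y hy2
    have hinj := (sChi χ).injective
    have d1 : (sChi χ x).val ≠ (sChi χ x').val := by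
      intro hc
      have hvv := congrArg Fin.val (hinj (Fin.ext hc))
      omega
    have d2 : (sChi χ y).val ≠ (sChi χ x).val := by
      intro hc
      have hvv := congrArg Fin.val (hinj (Fin.ext hc))
      omega
    have d3 : (sChi χ y).val ≠ (sChi χ x').val := by
      intro hc
      have hvv := congrArg Fin.val (hinj (Fin.ext hc))
      omega
    omega
  · exact hpair x y

end ListPart

section Bridge

variable {N : ℕ}

lemma comap_cancel₁ (s : Equiv.Perm (Fin N)) (ρ : Setoid (Fin N)) :
    Setoid.comap s (Setoid.comap s.symm ρ) = ρ :=
  Setoid.ext fun a b => by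
    show ρ.r (s.symm (s a)) (s.symm (s b)) ↔ ρ.r a b
    rw [Equiv.symm_apply_apply, Equiv.symm_apply_apply]

lemma comap_cancel₂ (s : Equiv.Perm (Fin N)) (ρ : Setoid (Fin N)) :
    Setoid.comap s.symm (Setoid.comap s ρ) = ρ :=
  Setoid.ext fun a b => by
    show ρ.r (s (s.symm a)) (s (s.symm b)) ↔ ρ.r a b
    rw [Equiv.apply_symm_apply, Equiv.apply_symm_apply]

lemma comap_top (s : Equiv.Perm (Fin N)) : Setoid.comap (⇑s) (⊤ : Setoid (Fin N)) = ⊤ :=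
  Setoid.ext fun a b => by
    exact ⟨fun _ => trivial, fun _ => trivial⟩

lemma comap_mono (s : Equiv.Perm (Fin N)) {ρ1 ρ2 : Setoid (Fin N)} (h : ρ1 ≤ ρ2) :
    Setoid.comap (⇑s) ρ1 ≤ Setoid.comap (⇑s) ρ2 := by
  rw [Setoid.le_def] at *
  intro x y hxy
  exact h hxy

end Bridge

/-- for `χ̂ ∈ {l,r}^{2n}` with `χ̂(2i−1) = χ̂(2i)` and the interval
partition `0̂` into consecutive pairs, a bi-non-crossing partition `τ` satisfies
`τ ∨ 0̂ = 1_χ̂` in `BNC(χ̂)` with all blocks of even cardinality iff `s_χ̂(1) ∼ s_χ̂(2n)`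
and `s_χ̂(2i) ∼ s_χ̂(2i+1)` for `i = 1,…,n−1`. -/
theorem join_pairs_eq_top_iff (n : ℕ) (hn : 0 < n) (χ : Fin (2 * n) → Side)
    (hχ : ∀ i : Fin n, χ ⟨2 * i.val, by have := i.isLt; omega⟩
      = χ ⟨2 * i.val + 1, by have := i.isLt; omega⟩)
    (τ : Setoid (Fin (2 * n))) (hτ : IsBNC χ τ) :
    ((∀ ρ : Setoid (Fin (2 * n)), IsBNC χ ρ → τ ≤ ρ →
        Setoid.ker (fun x : Fin (2 * n) => x.val / 2) ≤ ρ → ρ = ⊤) ∧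
      ∀ x : Fin (2 * n), Even (Nat.card {y : Fin (2 * n) // τ.r y x})) ↔
    (τ.r (sChi χ ⟨0, by omega⟩) (sChi χ ⟨2 * n - 1, by omega⟩) ∧
      ∀ i : Fin n, 0 < i.val →
        τ.r (sChi χ ⟨2 * i.val - 1, by have := i.isLt; omega⟩)
          (sChi χ ⟨2 * i.val, by have := i.isLt; omega⟩)) := by
  set s : Equiv.Perm (Fin (2*n)) := sChi χ with hs
  set π : Setoid (Fin (2*n)) := Setoid.comap s τ with hπdef
  have hπ : IsNC π := hτ
  have hker_comap : Setoid.comap (⇑s) (Setoid.ker (fun x : Fin (2*n) => x.val / 2))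
      = Setoid.ker (fun x : Fin (2*n) => x.val / 2) :=
    Setoid.ext fun a b => by
      show (s a).val / 2 = (s b).val / 2 ↔ a.val / 2 = b.val / 2
      exact sChi_pair_iff χ hχ a b
  have hker_comap' : Setoid.comap (⇑s.symm) (Setoid.ker (fun x : Fin (2*n) => x.val / 2))
      = Setoid.ker (fun x : Fin (2*n) => x.val / 2) := by
    have := congrArg (Setoid.comap (⇑s.symm)) hker_comap
    rw [comap_cancel₂] at this
    exact this.symm
  have main := NC_main n hn π hπ
  have ljoin : (∀ ρ : Setoid (Fin (2 * n)), IsBNC χ ρ → τ ≤ ρ →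
        Setoid.ker (fun x : Fin (2 * n) => x.val / 2) ≤ ρ → ρ = ⊤) ↔
      (∀ ρ : Setoid (Fin (2*n)), IsNC ρ → π ≤ ρ →
        Setoid.ker (fun x : Fin (2*n) => x.val / 2) ≤ ρ → ρ = ⊤) := by
    constructor
    · intro h σ hσNC hπσ hkerσ
      have h1 : IsBNC χ (Setoid.comap (⇑s.symm) σ) := by
        show IsNC (Setoid.comap (⇑s) (Setoid.comap (⇑s.symm) σ))
        rw [comap_cancel₁]
        exact hσNC
      have h2 : τ ≤ Setoid.comap (⇑s.symm) σ := by
        have := comap_mono s.symm (show π ≤ σ from hπσ)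
        rwa [hπdef, comap_cancel₂] at this
      have h3 : Setoid.ker (fun x : Fin (2 * n) => x.val / 2) ≤ Setoid.comap (⇑s.symm) σ := by
        have := comap_mono s.symm hkerσ
        rwa [hker_comap'] at this
      have := h _ h1 h2 h3
      have := congrArg (Setoid.comap (⇑s)) this
      rwa [comap_cancel₁, comap_top] at this
    · intro h ρ hρBNC hτρ hkerρ
      have h1 : IsNC (Setoid.comap (⇑s) ρ) := hρBNC
      have h2 : π ≤ Setoid.comap (⇑s) ρ := comap_mono s hτρ
      have h3 : Setoid.ker (fun x : Fin (2 * n) => x.val / 2) ≤ Setoid.comap (⇑s) ρ := by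
        have := comap_mono s hkerρ
        rwa [hker_comap] at this
      have := h _ h1 h2 h3
      have := congrArg (Setoid.comap (⇑s.symm)) this
      rwa [comap_cancel₂, comap_top] at this
  have leven : (∀ x : Fin (2 * n), Even (Nat.card {y : Fin (2 * n) // τ.r y x})) ↔
      (∀ x : Fin (2*n), Even (Nat.card {y : Fin (2*n) // π.r y x})) := by
    have hcard : ∀ x : Fin (2*n), Nat.card {y : Fin (2*n) // π.r y x}
        = Nat.card {y : Fin (2*n) // τ.r y (s x)} := fun x =>
      Nat.card_congr (Equiv.subtypeEquiv s (fun y => Iff.rfl))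
    constructor
    · intro h x
      rw [hcard x]
      exact h (s x)
    · intro h x
      have := h (s.symm x)
      rw [hcard (s.symm x), Equiv.apply_symm_apply] at this
      exact this
  rw [ljoin, leven]
  exact main
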